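/- Let B → A be a surjection of commutative rings with kernel J satisfying J² = 0 and J generated by a single element t. Let N be a B-module such that N/JN is flat over A and such that for every n ∈ N with tn = 0, n lies in (ker(B → A))·N. Then the natural map J ⊗_B N → JN is an isomorphism, hence (by the local criterion of flatness, when B is Noetherian local and N finitely generated) N is flat over B. -/

import Mathlib

open TensorProduct

/-- **Local criterion step in Schlessinger's gluing lemma.** Let `B → A` be a surjection of
commutative rings, realized as `A = B/J`, whose kernel `J` satisfies `J² = 0` and is
generated by a single element `t`. Let `N` be a `B`-module such that `N/JN`
(equivalently, the base change `(B/J) ⊗_B N`) is flat over `A = B/J`, and such that every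
`n ∈ N` with `t·n = 0` lies in `J·N`. Then the natural multiplication map `J ⊗_B N → JN`
is an isomorphism: it is injective with image the submodule `JN`. (By the local criterion of
flatness, when `B` is Noetherian local and `N` finitely generated, `N` is then flat over
`B`.) -/
theorem mul_map_bijective_of_torsion_in_JN
    (B N : Type*) [CommRing B] [AddCommGroup N] [Module B N]
    (t : B) (J : Ideal B) (hJt : J = Ideal.span {t}) (hJ2 : J ^ 2 = ⊥)
    (hflat : Module.Flat (B ⧸ J) ((B ⧸ J) ⊗[B] N))
    (htor : ∀ n : N, t • n = 0 → n ∈ (J • ⊤ : Submodule B N)) :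
    Function.Injective ⇑(TensorProduct.lift ((LinearMap.lsmul B N).comp J.subtype) :
      J ⊗[B] N →ₗ[B] N) ∧
    LinearMap.range (TensorProduct.lift ((LinearMap.lsmul B N).comp J.subtype) :
      J ⊗[B] N →ₗ[B] N) = J • (⊤ : Submodule B N) := by
  set f : J ⊗[B] N →ₗ[B] N :=
    TensorProduct.lift ((LinearMap.lsmul B N).comp J.subtype) with hf
  have htJ : t ∈ J := by rw [hJt]; exact Ideal.subset_span rfl
  set tJ : J := ⟨t, htJ⟩ with htJ'
  -- every element of J ⊗ N is a pure tensor tJ ⊗ n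
  have hpure : ∀ x : J ⊗[B] N, ∃ n : N, x = tJ ⊗ₜ[B] n := by
    intro x
    induction x using TensorProduct.induction_on with
    | zero => exact ⟨0, by simp⟩
    | tmul j n =>
        obtain ⟨b, hb⟩ : ∃ b : B, (j : B) = b * t := by
          have : (j : B) ∈ Ideal.span {t} := hJt ▸ j.2
          rw [Ideal.mem_span_singleton] at this
          obtain ⟨b, hb⟩ := this
          exact ⟨b, by rw [hb, mul_comm]⟩
        refine ⟨b • n, ?_⟩
        have hj : j = b • tJ := Subtype.ext (by simp [hb, smul_eq_mul, mul_comm, htJ'])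
        rw [hj, TensorProduct.smul_tmul]
    | add x y hx hy =>
        obtain ⟨n₁, rfl⟩ := hx
        obtain ⟨n₂, rfl⟩ := hy
        exact ⟨n₁ + n₂, by rw [TensorProduct.tmul_add]⟩
  -- if n ∈ J • ⊤ then tJ ⊗ n = 0
  have hzero : ∀ n ∈ (J • ⊤ : Submodule B N), tJ ⊗ₜ[B] n = (0 : J ⊗[B] N) := by
    intro n hn
    refine Submodule.smul_induction_on hn ?_ ?_
    · intro j hj m _
      have hjt : j * t = 0 := by
        have : j * t ∈ J ^ 2 := by
          rw [pow_two]; exact Ideal.mul_mem_mul hj htJ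
        simpa [hJ2] using this
      have : tJ ⊗ₜ[B] (j • m) = (j • tJ) ⊗ₜ[B] m := (TensorProduct.smul_tmul j tJ m).symm
      rw [this]
      have : j • tJ = (0 : J) := Subtype.ext (by simp [htJ', smul_eq_mul, hjt])
      rw [this, TensorProduct.zero_tmul]
    · intro x y hx hy
      rw [TensorProduct.tmul_add, hx, hy, add_zero]
  constructor
  · rw [injective_iff_map_eq_zero]
    intro x hx
    obtain ⟨n, rfl⟩ := hpure x
    have : t • n = 0 := by simpa [hf] using hx
    exact hzero n (htor n this)
  · apply le_antisymm
    · rintro _ ⟨x, rfl⟩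
      induction x using TensorProduct.induction_on with
      | zero => simp
      | tmul j n => exact Submodule.smul_mem_smul j.2 trivial
      | add x y hx hy => rw [map_add]; exact Submodule.add_mem _ hx hy
    · rw [Submodule.smul_le]
      intro j hj n _
      exact ⟨(⟨j, hj⟩ : J) ⊗ₜ[B] n, rfl⟩
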